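/- Let Y₁ and Y₂ be independent unit Fréchet random variables on a probability space, and let μ ∈ ℝ, σ > 0, α₁ > 0, α₂ > 0. Set Q = μ + σ·max(Y₁^{1/α₁}, Y₂^{1/α₂}). Then for every x > μ, P(Q ≤ x) = exp(−σ^{α₁}(x−μ)^{−α₁} − σ^{α₂}(x−μ)^{−α₂}), and for every x ≤ μ, P(Q ≤ x) = 0. (This is the accelerated Fréchet distribution underlying the AcAF model.) -/

import Mathlib

open MeasureTheory ProbabilityTheory Filter

/-- distribution function of the accelerated Fréchet random variable
`Q = μ + σ·max(Y₁^{1/α₁}, Y₂^{1/α₂})` built from two independent unit Fréchet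
random variables `Y₁`, `Y₂`. -/
theorem accelerated_frechet_cdf
    {Ω : Type*} [MeasurableSpace Ω] (P : Measure Ω) [IsProbabilityMeasure P]
    (Y₁ Y₂ : Ω → ℝ) (hY₁m : Measurable Y₁) (hY₂m : Measurable Y₂)
    (hindep : IndepFun Y₁ Y₂ P)
    (hY₁cdf : ∀ y : ℝ, P {ω | Y₁ ω ≤ y} =
      if 0 < y then ENNReal.ofReal (Real.exp (-1 / y)) else 0)
    (hY₂cdf : ∀ y : ℝ, P {ω | Y₂ ω ≤ y} =
      if 0 < y then ENNReal.ofReal (Real.exp (-1 / y)) else 0)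
    (μ σ α₁ α₂ : ℝ) (hσ : 0 < σ) (hα₁ : 0 < α₁) (hα₂ : 0 < α₂)
    (Q : Ω → ℝ)
    (hQ : ∀ ω, Q ω = μ + σ * max (Y₁ ω ^ (1 / α₁)) (Y₂ ω ^ (1 / α₂))) :
    (∀ x : ℝ, μ < x → P {ω | Q ω ≤ x} =
      ENNReal.ofReal (Real.exp (-(σ ^ α₁ * (x - μ) ^ (-α₁)) - σ ^ α₂ * (x - μ) ^ (-α₂)))) ∧
    (∀ x : ℝ, x ≤ μ → P {ω | Q ω ≤ x} = 0) := by
  have hN1 : P {ω | Y₁ ω ≤ (0:ℝ)} = 0 := by simpa using hY₁cdf 0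
  have hN2 : P {ω | Y₂ ω ≤ (0:ℝ)} = 0 := by simpa using hY₂cdf 0
  have hae1 : ∀ᵐ ω ∂P, 0 < Y₁ ω := by
    rw [ae_iff]; simpa [not_lt] using hN1
  have hae2 : ∀ᵐ ω ∂P, 0 < Y₂ ω := by
    rw [ae_iff]; simpa [not_lt] using hN2
  constructor
  · intro x hx
    set t : ℝ := (x - μ) / σ with ht
    have hxμ : (0:ℝ) < x - μ := by linarith
    have htpos : 0 < t := div_pos hxμ hσ
    have key : ∀ ω, 0 < Y₁ ω → 0 < Y₂ ω →
        (Q ω ≤ x ↔ (Y₁ ω ≤ t ^ α₁ ∧ Y₂ ω ≤ t ^ α₂)) := by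
      intro ω h1 h2
      rw [hQ]
      have e1 : Y₁ ω ^ (1 / α₁) ≤ t ↔ Y₁ ω ≤ t ^ α₁ := by
        rw [one_div]
        exact Real.rpow_inv_le_iff_of_pos h1.le htpos.le hα₁
      have e2 : Y₂ ω ^ (1 / α₂) ≤ t ↔ Y₂ ω ≤ t ^ α₂ := by
        rw [one_div]
        exact Real.rpow_inv_le_iff_of_pos h2.le htpos.le hα₂
      constructor
      · intro h
        have hm : max (Y₁ ω ^ (1 / α₁)) (Y₂ ω ^ (1 / α₂)) ≤ t := by
          rw [ht, le_div_iff₀ hσ]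
          nlinarith [mul_comm σ (max (Y₁ ω ^ (1 / α₁)) (Y₂ ω ^ (1 / α₂)))]
        exact ⟨e1.1 (le_trans (le_max_left _ _) hm), e2.1 (le_trans (le_max_right _ _) hm)⟩
      · rintro ⟨ha, hb⟩
        have hm : max (Y₁ ω ^ (1 / α₁)) (Y₂ ω ^ (1 / α₂)) ≤ t :=
          max_le (e1.2 ha) (e2.2 hb)
        have : σ * max (Y₁ ω ^ (1 / α₁)) (Y₂ ω ^ (1 / α₂)) ≤ σ * t :=
          mul_le_mul_of_nonneg_left hm hσ.le
        have hst : σ * t = x - μ := by rw [ht]; field_simp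
        linarith
    have hsets : ({ω | Q ω ≤ x} : Set Ω) =ᵐ[P]
        ((Y₁ ⁻¹' Set.Iic (t ^ α₁) ∩ Y₂ ⁻¹' Set.Iic (t ^ α₂)) : Set Ω) := by
      filter_upwards [hae1, hae2] with ω h1 h2
      show (Q ω ≤ x) = (Y₁ ω ≤ t ^ α₁ ∧ Y₂ ω ≤ t ^ α₂)
      simpa [Set.mem_inter_iff, Set.mem_preimage, Set.mem_Iic, eq_iff_iff] using
        key ω h1 h2
    rw [measure_congr hsets,
      hindep.measure_inter_preimage_eq_mul _ _ measurableSet_Iic measurableSet_Iic]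
    have h1 : P (Y₁ ⁻¹' Set.Iic (t ^ α₁)) = ENNReal.ofReal (Real.exp (-1 / t ^ α₁)) := by
      have h := hY₁cdf (t ^ α₁)
      rw [if_pos (Real.rpow_pos_of_pos htpos α₁)] at h
      exact h
    have h2 : P (Y₂ ⁻¹' Set.Iic (t ^ α₂)) = ENNReal.ofReal (Real.exp (-1 / t ^ α₂)) := by
      have h := hY₂cdf (t ^ α₂)
      rw [if_pos (Real.rpow_pos_of_pos htpos α₂)] at h
      exact h
    rw [h1, h2, ← ENNReal.ofReal_mul (Real.exp_nonneg _), ← Real.exp_add]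
    congr 1
    have harith : ∀ α : ℝ, 0 < α → -1 / t ^ α = -(σ ^ α * (x - μ) ^ (-α)) := by
      intro α hα
      rw [ht, Real.div_rpow hxμ.le hσ.le, Real.rpow_neg hxμ.le]
      rw [neg_div, div_div_eq_mul_div, one_mul]
      have h1 : (x - μ) ^ α ≠ 0 := ne_of_gt (Real.rpow_pos_of_pos hxμ α)
      field_simp
    rw [harith α₁ hα₁, harith α₂ hα₂]
    ring
  · intro x hx
    have hsub : {ω | Q ω ≤ x} ⊆ {ω | Y₁ ω ≤ (0:ℝ)} := by
      intro ω hω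
      simp only [Set.mem_setOf_eq] at hω ⊢
      by_contra hc
      push_neg at hc
      have hp : 0 < Y₁ ω ^ (1 / α₁) := Real.rpow_pos_of_pos hc _
      have : 0 < max (Y₁ ω ^ (1 / α₁)) (Y₂ ω ^ (1 / α₂)) := lt_max_of_lt_left hp
      have := hQ ω
      nlinarith
    exact measure_mono_null hsub hN1
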